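/- arXiv:1604.03930 — 4 statements merged into one kernel-verified Lean document; each statement's English description precedes it below -/
import Mathlib

section
/- Let A be a d×d real symmetric matrix, B a d×d real symmetric positive definite matrix, and v₁, …, v_d a B-orthonormal basis with A vᵢ = λᵢ B vᵢ and |λ₁| ≥ |λ₂| ≥ … ≥ |λ_d|, where |λ₁| > |λ₂|. Let w ∈ ℝ^d satisfy ⟨w, v₁⟩_B ≠ 0 and set w' = B^{-1} A w. Then w' ≠ 0, ⟨w', v₁⟩_B ≠ 0, and the tangent of the angle to v₁ contracts by a factor |λ₂|/|λ₁|: √(Σ_{i≥2} ⟨w', vᵢ⟩_B²) / |⟨w', v₁⟩_B| ≤ (|λ₂|/|λ₁|) · √(Σ_{i≥2} ⟨w, vᵢ⟩_B²) / |⟨w, v₁⟩_B|. -/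
open Matrix

/-- One step of the power iteration `w' = B⁻¹ A w` contracts the tangent of
the `B`-angle to the top generalized eigenvector `v₁` by a factor `|λ₂|/|λ₁|`. -/
theorem power_iteration_tangent_contraction (d : ℕ) (h2 : 2 ≤ d)
    (A B : Matrix (Fin d) (Fin d) ℝ) (hA : A.IsSymm) (hB : B.PosDef)
    (lam : Fin d → ℝ) (v : Fin d → (Fin d → ℝ))
    (heig : ∀ i, A.mulVec (v i) = lam i • B.mulVec (v i))
    (horth : ∀ i j, v i ⬝ᵥ B.mulVec (v j) = if i = j then 1 else 0)
    (hbasis : Submodule.span ℝ (Set.range v) = ⊤)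
    (hsort : ∀ i j : Fin d, i ≤ j → |lam j| ≤ |lam i|)
    (hgap : |lam ⟨1, h2⟩| < |lam ⟨0, Nat.lt_of_lt_of_le Nat.zero_lt_two h2⟩|)
    (w : Fin d → ℝ)
    (hw : w ⬝ᵥ B.mulVec (v ⟨0, Nat.lt_of_lt_of_le Nat.zero_lt_two h2⟩) ≠ 0) :
    (B⁻¹ * A).mulVec w ≠ 0 ∧
    (B⁻¹ * A).mulVec w ⬝ᵥ B.mulVec (v ⟨0, Nat.lt_of_lt_of_le Nat.zero_lt_two h2⟩) ≠ 0 ∧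
    Real.sqrt (∑ i ∈ Finset.univ.erase ⟨0, Nat.lt_of_lt_of_le Nat.zero_lt_two h2⟩,
        ((B⁻¹ * A).mulVec w ⬝ᵥ B.mulVec (v i)) ^ 2) /
      |(B⁻¹ * A).mulVec w ⬝ᵥ B.mulVec (v ⟨0, Nat.lt_of_lt_of_le Nat.zero_lt_two h2⟩)| ≤
    (|lam ⟨1, h2⟩| / |lam ⟨0, Nat.lt_of_lt_of_le Nat.zero_lt_two h2⟩|) *
      (Real.sqrt (∑ i ∈ Finset.univ.erase ⟨0, Nat.lt_of_lt_of_le Nat.zero_lt_two h2⟩,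
          (w ⬝ᵥ B.mulVec (v i)) ^ 2) /
        |w ⬝ᵥ B.mulVec (v ⟨0, Nat.lt_of_lt_of_le Nat.zero_lt_two h2⟩)|) := by
  set i0 : Fin d := ⟨0, Nat.lt_of_lt_of_le Nat.zero_lt_two h2⟩ with hi0
  set i1 : Fin d := ⟨1, h2⟩ with hi1
  have hBs : Bᵀ = B := by simpa using hB.1.eq
  have hBinv : B⁻¹ * B = 1 := nonsing_inv_mul B hB.det_pos.ne'.isUnit
  have hBsymm : B⁻¹ᵀ = B⁻¹ := by
    rw [transpose_nonsing_inv, hBs]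
  have key : ∀ i, (B⁻¹ * A).mulVec w ⬝ᵥ B.mulVec (v i)
      = lam i * (w ⬝ᵥ B.mulVec (v i)) := by
    intro i
    have h1 : (B⁻¹ * A).mulVec w ⬝ᵥ B.mulVec (v i)
        = w ⬝ᵥ (B⁻¹ * A)ᵀ.mulVec (B.mulVec (v i)) := by
      rw [dotProduct_comm, dotProduct_mulVec, ← mulVec_transpose, dotProduct_comm]
    rw [h1, transpose_mul, hBsymm, hA.eq, mulVec_mulVec, Matrix.mul_assoc, hBinv,
      Matrix.mul_one, heig i, dotProduct_smul, smul_eq_mul]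
  have hlam0 : lam i0 ≠ 0 := by
    intro h
    rw [h, abs_zero] at hgap
    exact absurd hgap (not_lt.mpr (abs_nonneg _))
  have hkey0 : (B⁻¹ * A).mulVec w ⬝ᵥ B.mulVec (v i0) ≠ 0 := by
    rw [key i0]; exact mul_ne_zero hlam0 hw
  refine ⟨?_, hkey0, ?_⟩
  · intro h
    rw [h, zero_dotProduct] at hkey0
    exact hkey0 rfl
  -- inequality
  have hC0 : 0 < |w ⬝ᵥ B.mulVec (v i0)| := abs_pos.mpr hw
  have hL0 : 0 < |lam i0| := lt_of_le_of_lt (abs_nonneg _) hgap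
  have hsum : ∑ i ∈ Finset.univ.erase i0, ((B⁻¹ * A).mulVec w ⬝ᵥ B.mulVec (v i)) ^ 2
      ≤ lam i1 ^ 2 * ∑ i ∈ Finset.univ.erase i0, (w ⬝ᵥ B.mulVec (v i)) ^ 2 := by
    rw [Finset.mul_sum]
    apply Finset.sum_le_sum
    intro i hi
    rw [key i, mul_pow]
    have hine : i1 ≤ i := by
      have hne : i ≠ i0 := Finset.ne_of_mem_erase hi
      have : (i : ℕ) ≠ 0 := fun h => hne (Fin.ext h)
      exact Fin.mk_le_of_le_val (Nat.one_le_iff_ne_zero.mpr this)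
    have : |lam i| ≤ |lam i1| := hsort i1 i hine
    have h2' : lam i ^ 2 ≤ lam i1 ^ 2 := by
      rw [← sq_abs (lam i), ← sq_abs (lam i1)]
      exact pow_le_pow_left₀ (abs_nonneg _) this 2
    exact mul_le_mul_of_nonneg_right h2' (sq_nonneg _)
  have hsqrt : Real.sqrt (∑ i ∈ Finset.univ.erase i0,
      ((B⁻¹ * A).mulVec w ⬝ᵥ B.mulVec (v i)) ^ 2)
      ≤ |lam i1| * Real.sqrt (∑ i ∈ Finset.univ.erase i0, (w ⬝ᵥ B.mulVec (v i)) ^ 2) := by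
    calc _ ≤ Real.sqrt (lam i1 ^ 2 * ∑ i ∈ Finset.univ.erase i0,
            (w ⬝ᵥ B.mulVec (v i)) ^ 2) := Real.sqrt_le_sqrt hsum
      _ = _ := by
          rw [Real.sqrt_mul (sq_nonneg _), Real.sqrt_sq_eq_abs]
  rw [key i0, abs_mul, div_mul_div_comm,
    div_le_div_iff₀ (by positivity) (by positivity)]
  exact mul_le_mul_of_nonneg_right hsqrt (by positivity)
end

section
/- Let A be a d×d real symmetric matrix, B a d×d real symmetric positive definite matrix, and v₁, …, v_d a B-orthonormal basis with A vᵢ = λᵢ B vᵢ and |λ₁| ≥ |λ₂| ≥ … ≥ |λ_d|, where |λ₁| > |λ₂|. Set ρ = 1 − |λ₂|/|λ₁| and define the power iteration w_{t+1} = B^{-1} A w_t from an initial w₀ with cos θ_B(w₀, v₁) > 0. Then for every ε ∈ (0,1) and every natural number T ≥ (2/ρ) · log(1/(ε · cos θ_B(w₀, v₁))), one has sin θ_B(w_T, v₁) ≤ ε. -/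
open Matrix

/-- The cosine of the angle between `u` and `v` in the `B`-geometry:
`cos θ_B(u, v) = |⟨u, v⟩_B| / ‖u‖_B` (for `v` of unit `B`-norm). -/
noncomputable def cosAngleB {d : ℕ} (B : Matrix (Fin d) (Fin d) ℝ) (u v : Fin d → ℝ) : ℝ :=
  |u ⬝ᵥ B.mulVec v| / Real.sqrt (u ⬝ᵥ B.mulVec u)

/-- The sine of the angle between `u` and `v` in the `B`-geometry. -/
noncomputable def sinAngleB {d : ℕ} (B : Matrix (Fin d) (Fin d) ℝ) (u v : Fin d → ℝ) : ℝ :=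
  Real.sqrt (1 - cosAngleB B u v ^ 2)

private lemma dotSum {d : ℕ} (u : Fin d → ℝ) (f : Fin d → Fin d → ℝ) :
    u ⬝ᵥ (∑ j, f j) = ∑ j, u ⬝ᵥ f j := by
  simp only [dotProduct, Finset.sum_apply, Finset.mul_sum]
  exact Finset.sum_comm

private lemma sumDot {d : ℕ} (u : Fin d → ℝ) (f : Fin d → Fin d → ℝ) :
    (∑ j, f j) ⬝ᵥ u = ∑ j, f j ⬝ᵥ u := by
  simp only [dotProduct, Finset.sum_apply, Finset.sum_mul]
  exact Finset.sum_comm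

private lemma expandDot {d : ℕ} (B : Matrix (Fin d) (Fin d) ℝ) (v : Fin d → (Fin d → ℝ))
    (horth : ∀ i j, v i ⬝ᵥ B.mulVec (v j) = if i = j then 1 else 0)
    (a b : Fin d → ℝ) :
    (∑ i, a i • v i) ⬝ᵥ B.mulVec (∑ j, b j • v j) = ∑ i, a i * b i := by
  have h1 : B.mulVec (∑ j, b j • v j) = ∑ j, b j • B.mulVec (v j) := by
    rw [show B.mulVec (∑ j, b j • v j) = B.mulVecLin (∑ j, b j • v j) from rfl, map_sum]
    simp [Matrix.mulVecLin_apply]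
  rw [h1, dotSum]
  have h2 : ∀ j, (∑ i, a i • v i) ⬝ᵥ (b j • B.mulVec (v j)) = a j * b j := by
    intro j
    rw [dotProduct_smul, sumDot]
    have : ∀ i, (a i • v i) ⬝ᵥ B.mulVec (v j) = a i * (if i = j then 1 else 0) := by
      intro i; rw [smul_dotProduct, horth]; simp
    simp only [this]
    simp [Finset.sum_ite_eq', mul_comm]
  simp only [h2]

private lemma single_expand {d : ℕ} (v : Fin d → (Fin d → ℝ)) (k : Fin d) :
    v k = ∑ j, (if j = k then (1:ℝ) else 0) • v j := by
  simp [Finset.sum_ite_eq']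

/-- Linear convergence of the (exact) power iteration `w_{t+1} = B⁻¹ A w_t`:
with `ρ = 1 - |λ₂|/|λ₁|`, after `T ≥ (2/ρ) log(1/(ε cos θ₀))` iterations we have
`sin θ_B(w_T, v₁) ≤ ε`. -/
theorem power_method_linear_convergence (d : ℕ) (h2 : 2 ≤ d)
    (A B : Matrix (Fin d) (Fin d) ℝ) (hA : A.IsSymm) (hB : B.PosDef)
    (lam : Fin d → ℝ) (v : Fin d → (Fin d → ℝ))
    (heig : ∀ i, A.mulVec (v i) = lam i • B.mulVec (v i))
    (horth : ∀ i j, v i ⬝ᵥ B.mulVec (v j) = if i = j then 1 else 0)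
    (hbasis : Submodule.span ℝ (Set.range v) = ⊤)
    (hsort : ∀ i j : Fin d, i ≤ j → |lam j| ≤ |lam i|)
    (v₁ : Fin d → ℝ) (hv₁ : v₁ = v ⟨0, Nat.lt_of_lt_of_le Nat.zero_lt_two h2⟩)
    (hgap : |lam ⟨1, h2⟩| < |lam ⟨0, Nat.lt_of_lt_of_le Nat.zero_lt_two h2⟩|)
    (ρ : ℝ) (hρ : ρ = 1 - |lam ⟨1, h2⟩| / |lam ⟨0, Nat.lt_of_lt_of_le Nat.zero_lt_two h2⟩|)
    (w : ℕ → (Fin d → ℝ))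
    (hiter : ∀ t : ℕ, w (t + 1) = (B⁻¹ * A).mulVec (w t))
    (hinit : 0 < cosAngleB B (w 0) v₁) :
    ∀ ε : ℝ, 0 < ε → ε < 1 →
      ∀ T : ℕ, (2 / ρ) * Real.log (1 / (ε * cosAngleB B (w 0) v₁)) ≤ (T : ℝ) →
        sinAngleB B (w T) v₁ ≤ ε := by
  intro ε hε hε1 T hT
  set i0 : Fin d := ⟨0, Nat.lt_of_lt_of_le Nat.zero_lt_two h2⟩ with hi0
  set i1 : Fin d := ⟨1, h2⟩ with hi1
  -- coefficients of w 0
  obtain ⟨c, hc⟩ : ∃ c : Fin d → ℝ, ∑ i, c i • v i = w 0 := by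
    have hmem : w 0 ∈ Submodule.span ℝ (Set.range v) := hbasis ▸ Submodule.mem_top
    exact (Submodule.mem_span_range_iff_exists_fun ℝ).mp hmem
  -- eigen equation for B⁻¹ * A
  have hBdet : IsUnit B.det := isUnit_iff_ne_zero.mpr hB.det_pos.ne'
  have heig' : ∀ i, (B⁻¹ * A).mulVec (v i) = lam i • v i := by
    intro i
    rw [← Matrix.mulVec_mulVec, heig i, Matrix.mulVec_smul, Matrix.mulVec_mulVec,
      Matrix.nonsing_inv_mul B hBdet, Matrix.one_mulVec]
  -- closed form of the iterates
  have hwT : ∀ t : ℕ, w t = ∑ i, (lam i ^ t * c i) • v i := by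
    intro t
    induction t with
    | zero => simp [← hc]
    | succ t ih =>
      rw [hiter t, ih]
      rw [show (B⁻¹ * A).mulVec (∑ i, (lam i ^ t * c i) • v i)
            = (B⁻¹ * A).mulVecLin (∑ i, (lam i ^ t * c i) • v i) from rfl, map_sum]
      refine Finset.sum_congr rfl fun i _ => ?_
      rw [_root_.map_smul, Matrix.mulVecLin_apply, heig' i, smul_smul]
      rw [show lam i ^ t * c i * lam i = lam i ^ (t+1) * c i by ring]
  -- basic dot products
  have hdot1 : ∀ t : ℕ, w t ⬝ᵥ B.mulVec v₁ = lam i0 ^ t * c i0 := by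
    intro t
    rw [hwT t, hv₁, single_expand v i0, expandDot B v horth]
    simp [Finset.sum_ite_eq']
  have hdot2 : ∀ t : ℕ, w t ⬝ᵥ B.mulVec (w t) = ∑ i, (lam i ^ t * c i) ^ 2 := by
    intro t
    rw [hwT t, expandDot B v horth]
    exact Finset.sum_congr rfl fun i _ => (sq _).symm
  set S : ℝ := ∑ i, c i ^ 2 with hS
  have hS0 : 0 ≤ S := Finset.sum_nonneg fun i _ => sq_nonneg _
  have hcos0 : cosAngleB B (w 0) v₁ = |c i0| / Real.sqrt S := by
    rw [cosAngleB, hdot1 0, hdot2 0]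
    simp [hS]
  rw [hcos0] at hinit hT
  have hSsqpos : 0 < Real.sqrt S := by
    rcases (Real.sqrt_nonneg S).lt_or_eq with h | h
    · exact h
    · exfalso; rw [← h, div_zero] at hinit; exact lt_irrefl 0 hinit
  have hcpos : 0 < |c i0| := by
    by_contra h
    push_neg at h
    have : |c i0| = 0 := le_antisymm h (abs_nonneg _)
    rw [this, zero_div] at hinit
    exact lt_irrefl 0 hinit
  have hc0ne : c i0 ≠ 0 := abs_pos.mp hcpos
  have hsqS : |c i0| ≤ Real.sqrt S := by
    have h1 : c i0 ^ 2 ≤ S := Finset.single_le_sum (fun i _ => sq_nonneg (c i)) (Finset.mem_univ i0)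
    calc |c i0| = Real.sqrt (c i0 ^ 2) := by rw [Real.sqrt_sq_eq_abs]
      _ ≤ Real.sqrt S := Real.sqrt_le_sqrt h1
  have hcos_le1 : |c i0| / Real.sqrt S ≤ 1 := (div_le_one hSsqpos).mpr hsqS
  -- spectral quantities
  have hL1 : 0 < |lam i0| := (abs_nonneg _).trans_lt hgap
  have hlam0ne : lam i0 ≠ 0 := abs_pos.mp hL1
  set r : ℝ := |lam i1| / |lam i0| with hr
  have hr0 : 0 ≤ r := div_nonneg (abs_nonneg _) (abs_nonneg _)
  have hr1 : r < 1 := (div_lt_one hL1).mpr hgap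
  have hρpos : 0 < ρ := by rw [hρ]; linarith
  -- quantities at time T
  set D : ℝ := ∑ i, (lam i ^ T * c i) ^ 2 with hD
  have hD0 : 0 ≤ D := Finset.sum_nonneg fun i _ => sq_nonneg _
  have hNsq : (lam i0 ^ T * c i0) ^ 2 = (|lam i0| ^ T * |c i0|) ^ 2 := by
    rw [← sq_abs (lam i0 ^ T * c i0), abs_mul, abs_pow]
  have hNpos : 0 < (lam i0 ^ T * c i0) ^ 2 := by
    rw [hNsq]; exact pow_pos (mul_pos (pow_pos hL1 T) hcpos) 2
  have hDge : (lam i0 ^ T * c i0) ^ 2 ≤ D :=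
    Finset.single_le_sum (fun i _ => sq_nonneg ((lam i ^ T) * c i)) (Finset.mem_univ i0)
  have hDpos : 0 < D := lt_of_lt_of_le hNpos hDge
  -- sin at time T
  have hcosT : cosAngleB B (w T) v₁ = |lam i0 ^ T * c i0| / Real.sqrt D := by
    rw [cosAngleB, hdot1 T, hdot2 T]
  have hcosTsq : cosAngleB B (w T) v₁ ^ 2 = (lam i0 ^ T * c i0) ^ 2 / D := by
    rw [hcosT, div_pow, sq_abs, Real.sq_sqrt hD0]
  -- numerator bound
  have hrest : D - (lam i0 ^ T * c i0) ^ 2 = ∑ i ∈ Finset.univ.erase i0, (lam i ^ T * c i) ^ 2 := by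
    rw [hD, ← Finset.add_sum_erase Finset.univ _ (Finset.mem_univ i0)]
    ring
  have hrest_le : D - (lam i0 ^ T * c i0) ^ 2 ≤ (|lam i1| ^ T) ^ 2 * S := by
    rw [hrest]
    calc ∑ i ∈ Finset.univ.erase i0, (lam i ^ T * c i) ^ 2
        ≤ ∑ i ∈ Finset.univ.erase i0, (|lam i1| ^ T) ^ 2 * c i ^ 2 := by
          refine Finset.sum_le_sum fun i hi => ?_
          have hine : i ≠ i0 := Finset.ne_of_mem_erase hi
          have h1i : i1 ≤ i := by
            have hv : i.1 ≠ 0 := fun h => hine (Fin.ext h)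
            exact Nat.one_le_iff_ne_zero.mpr hv
          have hle : |lam i| ≤ |lam i1| := hsort i1 i h1i
          have : (lam i ^ T * c i) ^ 2 = (|lam i| ^ T) ^ 2 * c i ^ 2 := by
            rw [← sq_abs (lam i ^ T * c i), abs_mul, abs_pow, mul_pow, sq_abs]
          rw [this]
          refine mul_le_mul_of_nonneg_right ?_ (sq_nonneg _)
          exact pow_le_pow_left₀ (pow_nonneg (abs_nonneg _) T) (pow_le_pow_left₀ (abs_nonneg _) hle T) 2
      _ ≤ (|lam i1| ^ T) ^ 2 * S := by
          rw [← Finset.mul_sum]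
          refine mul_le_mul_of_nonneg_left ?_ (sq_nonneg _)
          exact Finset.sum_le_sum_of_subset_of_nonneg (Finset.subset_univ _)
            (fun i _ _ => sq_nonneg _)
  -- the key squared bound
  set Q : ℝ := (|lam i1| ^ T * Real.sqrt S) / (|lam i0| ^ T * |c i0|) with hQ
  have hQ0 : 0 ≤ Q := div_nonneg (mul_nonneg (pow_nonneg (abs_nonneg _) T) (Real.sqrt_nonneg _))
    (mul_nonneg (pow_nonneg (abs_nonneg _) T) (abs_nonneg _))
  have hsin_le_Q : sinAngleB B (w T) v₁ ≤ Q := by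
    have h1 : 1 - cosAngleB B (w T) v₁ ^ 2 ≤ Q ^ 2 := by
      rw [hcosTsq, one_sub_div hDpos.ne']
      have hQsq : Q ^ 2 = ((|lam i1| ^ T) ^ 2 * S) / ((|lam i0| ^ T * |c i0|) ^ 2) := by
        rw [hQ, div_pow, mul_pow, Real.sq_sqrt hS0]
      rw [hQsq]
      refine div_le_div₀ (by positivity) hrest_le ?_ ?_
      · exact pow_pos (mul_pos (pow_pos hL1 T) hcpos) 2
      · rw [← hNsq]; exact hDge
    calc sinAngleB B (w T) v₁ = Real.sqrt (1 - cosAngleB B (w T) v₁ ^ 2) := rfl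
      _ ≤ Real.sqrt (Q ^ 2) := Real.sqrt_le_sqrt h1
      _ = Q := by rw [Real.sqrt_sq hQ0]
  -- convert Q and conclude
  set m : ℝ := ε * (|c i0| / Real.sqrt S) with hm
  have hmpos : 0 < m := mul_pos hε (div_pos hcpos hSsqpos)
  have hm1 : m ≤ 1 := mul_le_one₀ hε1.le (div_nonneg (abs_nonneg _) (Real.sqrt_nonneg _)) hcos_le1
  have hrT_le : r ^ T ≤ m ^ 2 := by
    have hrexp : r ≤ Real.exp (-ρ) := by
      have := Real.add_one_le_exp (-ρ)
      rw [hρ] at *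
      linarith [this]
    have h1 : r ^ T ≤ Real.exp (-ρ) ^ T := pow_le_pow_left₀ hr0 hrexp T
    have h2 : Real.exp (-ρ) ^ T = Real.exp (-(ρ * T)) := by
      rw [← Real.exp_nat_mul]
      ring_nf
    have hlog : Real.log (1 / m) = - Real.log m := by
      rw [one_div, Real.log_inv]
    have h3 : 2 * Real.log (1 / m) ≤ ρ * T := by
      have := mul_le_mul_of_nonneg_left hT hρpos.le
      calc 2 * Real.log (1 / m) = ρ * (2 / ρ * Real.log (1 / m)) := by
            field_simp
          _ ≤ ρ * T := this
    have h4 : -(ρ * T) ≤ 2 * Real.log m := by rw [hlog] at h3; linarith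
    have h5 : Real.exp (-(ρ * T)) ≤ Real.exp (2 * Real.log m) := Real.exp_le_exp.mpr h4
    have h6 : Real.exp (2 * Real.log m) = m ^ 2 := by
      rw [show (2:ℝ) * Real.log m = Real.log (m ^ 2) by rw [Real.log_pow]; push_cast; ring,
        Real.exp_log (by positivity)]
    calc r ^ T ≤ Real.exp (-ρ) ^ T := h1
      _ = Real.exp (-(ρ * T)) := h2
      _ ≤ Real.exp (2 * Real.log m) := h5
      _ = m ^ 2 := h6
  have hQ_eq : Q = r ^ T * (Real.sqrt S / |c i0|) := by
    rw [hQ, hr, div_pow]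
    field_simp
  have hfinal : Q ≤ ε := by
    rw [hQ_eq]
    have h1 : r ^ T * (Real.sqrt S / |c i0|) ≤ m ^ 2 * (Real.sqrt S / |c i0|) :=
      mul_le_mul_of_nonneg_right hrT_le (div_nonneg (Real.sqrt_nonneg _) (abs_nonneg _))
    have hone : (|c i0| / Real.sqrt S) * (Real.sqrt S / |c i0|) = 1 := by
      rw [div_mul_div_comm, mul_comm (Real.sqrt S)]
      exact div_self (ne_of_gt (mul_pos hcpos hSsqpos))
    have h2 : m ^ 2 * (Real.sqrt S / |c i0|) = ε * m := by
      calc m ^ 2 * (Real.sqrt S / |c i0|)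
          = (ε * m) * ((|c i0| / Real.sqrt S) * (Real.sqrt S / |c i0|)) := by rw [hm]; ring
        _ = ε * m := by rw [hone, mul_one]
    have h3 : ε * m ≤ ε * 1 := mul_le_mul_of_nonneg_left hm1 hε.le
    linarith
  linarith [hsin_le_Q, hfinal]
end

section
/- Let B be a d×d real symmetric positive definite matrix and m ∈ ℝ^d a nonzero vector, and set A = m mᵀ. Define x★ = B^{-1} m / √(mᵀ B^{-1} m). Then x★ᵀ B x★ = 1; for every x ∈ ℝ^d with xᵀ B x = 1 one has xᵀ A x ≤ mᵀ B^{-1} m, with equality attained at x★ (i.e. x★ᵀ A x★ = mᵀ B^{-1} m); and any x with xᵀ B x = 1 and xᵀ A x = mᵀ B^{-1} m satisfies x = x★ or x = −x★. Consequently, computing the top generalized eigenvector of (m mᵀ, B) yields the solution of the linear system B x = m up to nonzero scaling, so the top-1 generalized eigenvector problem is at least as hard as solving symmetric positive definite linear systems. -/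
open Matrix

private lemma quad_pos {d : ℕ} {B : Matrix (Fin d) (Fin d) ℝ} (hB : B.PosDef)
    {x : Fin d → ℝ} (hx : x ≠ 0) : 0 < x ⬝ᵥ B.mulVec x := by
  have := hB.dotProduct_mulVec_pos hx
  simpa using this

private lemma quad_vecMulVec {d : ℕ} (m x : Fin d → ℝ) :
    x ⬝ᵥ (vecMulVec m m).mulVec x = (m ⬝ᵥ x) * (m ⬝ᵥ x) := by
  simp only [dotProduct, mulVec, vecMulVec_apply, Finset.mul_sum, Finset.sum_mul]
  rw [Finset.sum_comm]
  congr 1; ext i; congr 1; ext j; ring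

private lemma symm_form {d : ℕ} {B : Matrix (Fin d) (Fin d) ℝ} (hB : B.PosDef)
    (x y : Fin d → ℝ) : x ⬝ᵥ B.mulVec y = y ⬝ᵥ B.mulVec x := by
  rw [Matrix.dotProduct_mulVec, ← Matrix.mulVec_transpose, dotProduct_comm]
  congr 1
  rw [show Bᵀ = B from by simpa [Matrix.IsHermitian] using hB.1]

/-- With `A = m mᵀ` and `x★ = B⁻¹ m / √(mᵀ B⁻¹ m)`, the vector `x★` is
`B`-normalized, maximizes `xᵀ A x` over `{x : xᵀ B x = 1}` with maximum value `mᵀ B⁻¹ m`,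
and is the unique maximizer up to sign. Hence the top generalized eigenvector of
`(m mᵀ, B)` solves the linear system `B x = m` up to nonzero scaling. -/
theorem top_genEig_solves_linear_system (d : ℕ)
    (B : Matrix (Fin d) (Fin d) ℝ) (hB : B.PosDef)
    (m : Fin d → ℝ) (hm : m ≠ 0)
    (A : Matrix (Fin d) (Fin d) ℝ) (hA : A = Matrix.vecMulVec m m)
    (xs : Fin d → ℝ)
    (hxs : xs = (Real.sqrt (m ⬝ᵥ B⁻¹.mulVec m))⁻¹ • B⁻¹.mulVec m) :
    xs ⬝ᵥ B.mulVec xs = 1 ∧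
    (∀ x : Fin d → ℝ, x ⬝ᵥ B.mulVec x = 1 → x ⬝ᵥ A.mulVec x ≤ m ⬝ᵥ B⁻¹.mulVec m) ∧
    xs ⬝ᵥ A.mulVec xs = m ⬝ᵥ B⁻¹.mulVec m ∧
    (∀ x : Fin d → ℝ, x ⬝ᵥ B.mulVec x = 1 → x ⬝ᵥ A.mulVec x = m ⬝ᵥ B⁻¹.mulVec m →
        x = xs ∨ x = -xs) := by
  set y : Fin d → ℝ := B⁻¹.mulVec m with hy
  set c : ℝ := m ⬝ᵥ y with hc
  have hBy : B.mulVec y = m := by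
    rw [hy, Matrix.mulVec_mulVec, Matrix.mul_nonsing_inv _ (isUnit_iff_ne_zero.mpr hB.det_pos.ne'), Matrix.one_mulVec]
  have hcpos : 0 < c := by
    have := quad_pos hB.inv hm
    simpa [hc, hy] using this
  have hycy : y ⬝ᵥ B.mulVec y = c := by
    rw [hBy, dotProduct_comm]
  have hsqrt : Real.sqrt c * Real.sqrt c = c := Real.mul_self_sqrt hcpos.le
  have hsne : Real.sqrt c ≠ 0 := by positivity
  -- B-norm of xs
  have h1 : xs ⬝ᵥ B.mulVec xs = 1 := by
    rw [hxs]
    rw [Matrix.mulVec_smul, dotProduct_smul, smul_dotProduct, hycy]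
    field_simp
    rw [smul_eq_mul, smul_eq_mul, one_div, ← mul_assoc, ← mul_inv, hsqrt, inv_mul_cancel₀ hcpos.ne']
  -- key: x ⬝ᵥ B y = m ⬝ᵥ x
  have hxBy : ∀ x : Fin d → ℝ, x ⬝ᵥ B.mulVec y = m ⬝ᵥ x := fun x => by
    rw [hBy, dotProduct_comm]
  -- Cauchy-Schwarz
  have key : ∀ x : Fin d → ℝ, x ⬝ᵥ B.mulVec x = 1 →
      (m ⬝ᵥ x) * (m ⬝ᵥ x) ≤ c ∧
      ((m ⬝ᵥ x) * (m ⬝ᵥ x) = c → c • x = (m ⬝ᵥ x) • y) := by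
    intro x hx
    set s : ℝ := m ⬝ᵥ x with hs
    set z : Fin d → ℝ := c • x - s • y with hz
    have hzz : z ⬝ᵥ B.mulVec z = c * (c - s * s) := by
      rw [hz]
      simp only [Matrix.mulVec_sub, Matrix.mulVec_smul, sub_dotProduct,
        dotProduct_sub, smul_dotProduct, dotProduct_smul, hx, hycy]
      rw [hxBy x, symm_form hB y x, hxBy x]
      simp only [smul_eq_mul, ← hs]
      ring
    have hzz0 : 0 ≤ z ⬝ᵥ B.mulVec z := by
      by_cases h : z = 0
      · simp [h]
      · exact (quad_pos hB h).le
    constructor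
    · nlinarith
    · intro heq
      have hz0 : z = 0 := by
        by_contra h
        have := quad_pos hB h
        rw [hzz, heq] at this
        simp at this
      have := sub_eq_zero.mp hz0
      exact this
  refine ⟨h1, ?_, ?_, ?_⟩
  · intro x hx
    rw [hA, quad_vecMulVec]
    exact (key x hx).1
  · rw [hA, quad_vecMulVec, hxs]
    simp only [dotProduct_smul, smul_eq_mul, ← hc]
    field_simp
    rw [Real.sq_sqrt hcpos.le]
  · intro x hx heq
    rw [hA, quad_vecMulVec] at heq
    have hcx := (key x hx).2 heq
    set s : ℝ := m ⬝ᵥ x with hs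
    have hx_eq : x = (s / c) • y := by
      have h2 : x = c⁻¹ • (c • x) := by
        rw [smul_smul, inv_mul_cancel₀ hcpos.ne', one_smul]
      rw [h2, hcx, smul_smul, div_eq_inv_mul]
    have hs2 : s * s = c := heq
    have : s = Real.sqrt c ∨ s = -Real.sqrt c :=
      mul_self_eq_mul_self_iff.mp (by rw [hs2, hsqrt])
    rcases this with h | h
    · left
      rw [hx_eq, hxs]
      congr 1
      rw [h]
      field_simp
      exact Real.sq_sqrt hcpos.le
    · right
      rw [hx_eq, hxs, ← neg_smul]
      congr 1
      rw [h, neg_div, neg_inj]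
      field_simp
      exact Real.sq_sqrt hcpos.le
end

section
/- Let f : ℝ^d → ℝ be differentiable, α-strongly convex and β-smooth (its gradient is β-Lipschitz) with 0 < α ≤ β, let x★ be its minimizer, and set Q = β/α. Consider Nesterov's accelerated gradient descent started at x₀ with y₀ = x₀ and iterates y_{t+1} = x_t − (1/β) ∇f(x_t), x_{t+1} = y_{t+1} + ((√Q − 1)/(√Q + 1)) (y_{t+1} − y_t). Then for every t ≥ 0, f(y_t) − f(x★) ≤ 2 (f(x₀) − f(x★)) · exp(−t/√Q). -/
open RealInnerProductSpace

section AuxNesterov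
variable {E : Type*} [NormedAddCommGroup E] [InnerProductSpace ℝ E] [CompleteSpace E]
set_option linter.unusedSectionVars false

lemma line_hasDerivAt (f : E → ℝ) (g : E → E)
    (hgrad : ∀ p, HasGradientAt f (g p) p) (v w : E) (t : ℝ) :
    HasDerivAt (fun t : ℝ => f (v + t • w)) ⟪g (v + t • w), w⟫ t := by
  have hline : HasDerivAt (fun t : ℝ => v + t • w) w t := by
    simpa using ((hasDerivAt_id t).smul_const w).const_add v
  have h := (hgrad (v + t • w)).hasFDerivAt.comp_hasDerivAt t hline
  simp [InnerProductSpace.toDual_apply_apply] at h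
  exact h

lemma smooth_upper (f : E → ℝ) (g : E → E) (β : ℝ) (hβ : 0 ≤ β)
    (hgrad : ∀ p, HasGradientAt f (g p) p)
    (hsmooth : LipschitzWith (Real.toNNReal β) g) (u v : E) :
    f u ≤ f v + ⟪g v, u - v⟫ + β / 2 * ‖u - v‖ ^ 2 := by
  set w := u - v with hw
  set ψ : ℝ → ℝ := fun t => f (v + t • w) - t * ⟪g v, w⟫ - β / 2 * t ^ 2 * ‖w‖ ^ 2 with hψ
  have hder : ∀ t : ℝ, HasDerivAt ψ
      (⟪g (v + t • w), w⟫ - ⟪g v, w⟫ - β * t * ‖w‖ ^ 2) t := by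
    intro t
    have h1 := line_hasDerivAt f g hgrad v w t
    have h2 : HasDerivAt (fun t : ℝ => t * ⟪g v, w⟫) ⟪g v, w⟫ t := by
      simpa using (hasDerivAt_id t).mul_const (⟪g v, w⟫ : ℝ)
    have h3 : HasDerivAt (fun t : ℝ => β / 2 * t ^ 2 * ‖w‖ ^ 2) (β * t * ‖w‖ ^ 2) t := by
      have := ((hasDerivAt_pow 2 t).const_mul (β / 2)).mul_const (‖w‖ ^ 2)
      exact this.congr_deriv (by ring)
    exact (h1.sub h2).sub h3
  have hmono : AntitoneOn ψ (Set.Icc (0 : ℝ) 1) := by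
    apply antitoneOn_of_deriv_nonpos (convex_Icc _ _)
    · exact fun t _ => ((hder t).continuousAt).continuousWithinAt
    · exact fun t _ => ((hder t).differentiableAt).differentiableWithinAt
    · intro t ht
      rw [interior_Icc] at ht
      rw [(hder t).deriv]
      have hinner : ⟪g (v + t • w), w⟫ - ⟪g v, w⟫ = ⟪g (v + t • w) - g v, w⟫ := by
        rw [inner_sub_left]
      rw [hinner]
      have hcs : ⟪g (v + t • w) - g v, w⟫ ≤ ‖g (v + t • w) - g v‖ * ‖w‖ :=
        real_inner_le_norm _ _
      have hlip : ‖g (v + t • w) - g v‖ ≤ β * (t * ‖w‖) := by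
        have := hsmooth.dist_le_mul (v + t • w) v
        rw [dist_eq_norm, dist_eq_norm] at this
        simp only [add_sub_cancel_left] at this
        calc ‖g (v + t • w) - g v‖ ≤ (Real.toNNReal β : ℝ) * ‖t • w‖ := this
          _ = β * (t * ‖w‖) := by
              rw [Real.coe_toNNReal _ hβ, norm_smul, Real.norm_eq_abs, abs_of_pos ht.1]
      nlinarith [norm_nonneg w, norm_nonneg (g (v + t • w) - g v), ht.1.le]
  have h01 := hmono (Set.left_mem_Icc.2 zero_le_one) (Set.right_mem_Icc.2 zero_le_one) zero_le_one
  have hψ0 : ψ 0 = f v := by simp [hψ]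
  have hψ1 : ψ 1 = f u - ⟪g v, w⟫ - β / 2 * ‖w‖ ^ 2 := by
    simp [hψ, hw]
  rw [hψ0, hψ1] at h01
  linarith

lemma sc_lower (f : E → ℝ) (g : E → E) (α : ℝ)
    (hgrad : ∀ p, HasGradientAt f (g p) p)
    (hconv : StrongConvexOn Set.univ α f) (u v : E) :
    f v + ⟪g v, u - v⟫ + α / 2 * ‖u - v‖ ^ 2 ≤ f u := by
  set φ : ℝ → ℝ := fun t => f (v + t • (u - v)) with hφdef
  have hder : HasDerivAt φ ⟪g v, u - v⟫ 0 := by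
    have := line_hasDerivAt f g hgrad v (u - v) 0
    simpa using this
  have hslope : Filter.Tendsto (slope φ 0) (nhdsWithin 0 {(0:ℝ)}ᶜ) (nhds ⟪g v, u - v⟫) :=
    hasDerivAt_iff_tendsto_slope.mp hder
  have hslope' : Filter.Tendsto (slope φ 0) (nhdsWithin 0 (Set.Ioi 0)) (nhds ⟪g v, u - v⟫) :=
    hslope.mono_left (nhdsWithin_mono _ (fun t ht => ne_of_gt ht))
  have hbound : ∀ t ∈ Set.Ioo (0:ℝ) 1,
      slope φ 0 t ≤ f u - f v - (1 - t) * (α / 2 * ‖u - v‖ ^ 2) := by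
    intro t ht
    have hc := hconv.2 (Set.mem_univ u) (Set.mem_univ v) ht.1.le (by linarith [ht.2] : (0:ℝ) ≤ 1 - t) (by ring)
    have heq : t • u + (1 - t) • v = v + t • (u - v) := by module
    rw [heq] at hc
    have hslope_eq : slope φ 0 t = (φ t - φ 0) / t := by
      rw [slope_def_field]; ring_nf
    rw [hslope_eq]
    rw [div_le_iff₀ ht.1]
    have hφ0 : φ 0 = f v := by simp [hφdef]
    rw [hφ0]
    simp only [hφdef]
    simp only [smul_eq_mul] at hc
    nlinarith [hc]
  have hrhs : Filter.Tendsto (fun t : ℝ => f u - f v - (1 - t) * (α / 2 * ‖u - v‖ ^ 2))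
      (nhdsWithin 0 (Set.Ioi 0)) (nhds (f u - f v - α / 2 * ‖u - v‖ ^ 2)) := by
    have hcont : Continuous (fun t : ℝ => f u - f v - (1 - t) * (α / 2 * ‖u - v‖ ^ 2)) := by
      continuity
    have h0 := hcont.tendsto 0
    simp only [sub_zero, one_mul] at h0
    exact h0.mono_left nhdsWithin_le_nhds
  have hev : ∀ᶠ t in nhdsWithin 0 (Set.Ioi (0:ℝ)),
      slope φ 0 t ≤ f u - f v - (1 - t) * (α / 2 * ‖u - v‖ ^ 2) := by
    filter_upwards [Ioo_mem_nhdsGT_of_mem (Set.left_mem_Ico.2 zero_lt_one)] with t ht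
    exact hbound t ht
  have := le_of_tendsto_of_tendsto hslope' hrhs hev
  linarith


lemma grad_zero_at_min (f : E → ℝ) (g : E → E)
    (hgrad : ∀ p, HasGradientAt f (g p) p) (xstar : E) (hmin : ∀ w, f xstar ≤ f w) :
    g xstar = 0 := by
  have hloc : IsLocalMin f xstar := Filter.Eventually.of_forall hmin
  have h0 := hloc.hasFDerivAt_eq_zero (hgrad xstar).hasFDerivAt
  have := congrArg (InnerProductSpace.toDual ℝ E).symm h0
  simpa using this

lemma expand_norm_sq (p q r : ℝ) (a b c : E) :
    ‖p • a + q • b - r • c‖ ^ 2 =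
      p ^ 2 * ‖a‖ ^ 2 + q ^ 2 * ‖b‖ ^ 2 + r ^ 2 * ‖c‖ ^ 2
        + 2 * p * q * ⟪a, b⟫ - 2 * p * r * ⟪a, c⟫ - 2 * q * r * ⟪b, c⟫ := by
  rw [@norm_sub_sq_real, @norm_add_sq_real]
  simp only [real_inner_smul_left, real_inner_smul_right, norm_smul, Real.norm_eq_abs,
    inner_add_left, mul_pow, sq_abs]
  ring

lemma norm_sub_sq_expand (a b : E) : ‖a - b‖ ^ 2 = ‖a‖ ^ 2 - 2 * ⟪a, b⟫ + ‖b‖ ^ 2 :=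
  norm_sub_sq_real a b

lemma key_scalar (α κ s A B Gg ab aG bG Z fx fy fs fyp : ℝ)
    (hα : 0 < α) (hκ : 1 ≤ κ) (hs : s = 1 / κ)
    (hF1 : fyp ≤ fx - Gg / (2 * (α * κ ^ 2)))
    (hF2 : fx - bG + α / 2 * B ≤ fs)
    (hF3 : fx + s * (bG - aG) + α / 2 * (s ^ 2 * (A - 2 * ab + B)) ≤ fy)
    (hZ : α / 2 * Z = α / 2 * (1 - s) ^ 2 * A + α / 2 * s ^ 2 * B + Gg / (2 * (α * κ ^ 2))
        + α * (1 - s) * s * ab - (1 - s) * s * aG - s ^ 2 * bG)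
    (hD : 0 ≤ A - 2 * ab + B) :
    fyp - fs + α / 2 * Z ≤ (1 - s) * (fy - fs + α / 2 * A) := by
  have hκ0 : 0 < κ := lt_of_lt_of_le one_pos hκ
  have hs0 : 0 < s := by rw [hs]; positivity
  have hs1 : s ≤ 1 := by rw [hs]; rw [div_le_one hκ0]; exact hκ
  have hkey : 0 ≤ α * (s * (1 - s) * (1 + s) * (A - 2 * ab + B)) :=
    mul_nonneg hα.le (mul_nonneg (mul_nonneg (mul_nonneg hs0.le (sub_nonneg.2 hs1))
      (by linarith)) hD)
  rw [hZ]
  nlinarith [mul_le_mul_of_nonneg_left hF3 (sub_nonneg.2 hs1),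
    mul_le_mul_of_nonneg_left hF2 hs0.le, hkey, hF1]

lemma zexp (α κ s A B Gg ab aG bG : ℝ) (hα : α ≠ 0) (hκ : κ ≠ 0) (hs : s = 1 / κ) :
    α / 2 * ((1 - s) ^ 2 * A + s ^ 2 * B + (s / α) ^ 2 * Gg
        + 2 * (1 - s) * s * ab - 2 * (1 - s) * (s / α) * aG - 2 * s * (s / α) * bG)
      = α / 2 * (1 - s) ^ 2 * A + α / 2 * s ^ 2 * B + Gg / (2 * (α * κ ^ 2))
        + α * (1 - s) * s * ab - (1 - s) * s * aG - s ^ 2 * bG := by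
  subst hs
  field_simp

end AuxNesterov

open Matrix

/-- Nesterov's accelerated gradient descent on an `α`-strongly convex,
`β`-smooth differentiable `f` with minimizer `x★` and `Q = β/α` satisfies
`f(y_t) − f(x★) ≤ 2 (f(x₀) − f(x★)) exp(−t/√Q)`. -/
theorem nesterov_agd_convergence (d : ℕ)
    (f : EuclideanSpace ℝ (Fin d) → ℝ)
    (g : EuclideanSpace ℝ (Fin d) → EuclideanSpace ℝ (Fin d))
    (α β : ℝ) (hα : 0 < α) (hαβ : α ≤ β)
    (hgrad : ∀ x, HasGradientAt f (g x) x)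
    (hconv : StrongConvexOn Set.univ α f)
    (hsmooth : LipschitzWith (Real.toNNReal β) g)
    (xstar : EuclideanSpace ℝ (Fin d)) (hmin : ∀ w, f xstar ≤ f w)
    (Q : ℝ) (hQ : Q = β / α)
    (x y : ℕ → EuclideanSpace ℝ (Fin d))
    (hy0 : y 0 = x 0)
    (hy : ∀ t : ℕ, y (t + 1) = x t - (1 / β) • g (x t))
    (hx : ∀ t : ℕ, x (t + 1) =
      y (t + 1) + ((Real.sqrt Q - 1) / (Real.sqrt Q + 1)) • (y (t + 1) - y t)) :
    ∀ t : ℕ, f (y t) - f xstar ≤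
      2 * (f (x 0) - f xstar) * Real.exp (-(t : ℝ) / Real.sqrt Q) := by
  have hβpos : 0 < β := lt_of_lt_of_le hα hαβ
  have hQ1 : 1 ≤ Q := by rw [hQ, le_div_iff₀ hα]; linarith
  set κ := Real.sqrt Q with hκdef
  have hκ1 : 1 ≤ κ := by
    rw [hκdef, show (1:ℝ) = Real.sqrt 1 by simp]
    exact Real.sqrt_le_sqrt hQ1
  have hκ0 : 0 < κ := lt_of_lt_of_le one_pos hκ1
  have hκ10 : κ + 1 ≠ 0 := by positivity
  have hκsq : κ ^ 2 = Q := Real.sq_sqrt (by linarith)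
  have hβκ : β = α * κ ^ 2 := by rw [hκsq, hQ]; field_simp
  set s : ℝ := 1 / κ with hsdef
  have hs0 : 0 < s := by rw [hsdef]; positivity
  have hs1 : s ≤ 1 := by rw [hsdef, div_le_one hκ0]; exact hκ1
  have hg0 : g xstar = 0 := grad_zero_at_min f g hgrad xstar hmin
  set z : ℕ → EuclideanSpace ℝ (Fin d) := fun t => (1 + κ) • x t - κ • y t with hzdef
  have hz0 : z 0 = x 0 := by rw [hzdef]; simp only [hy0]; module
  have hzrec : ∀ t, z (t + 1) = (1 - s) • z t + s • x t - (s / α) • g (x t) := by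
    intro t
    simp only [hzdef]
    rw [hx t, hy t]
    match_scalars <;>
      (simp only [hsdef, hβκ]; field_simp; try ring)
  have hyx : ∀ t, y t - x t = s • ((x t - xstar) - (z t - xstar)) := by
    intro t
    have h : (x t - xstar) - (z t - xstar) = κ • (y t - x t) := by
      simp only [hzdef]; module
    rw [h, smul_smul, hsdef]
    field_simp
    rw [one_smul]
  set Φ : ℕ → ℝ := fun t => f (y t) - f xstar + α / 2 * ‖z t - xstar‖ ^ 2 with hΦdef
  have hstep : ∀ t, Φ (t + 1) ≤ (1 - s) * Φ t := by
    intro t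
    set a := z t - xstar with ha
    set b := x t - xstar with hb
    have hF1 : f (y (t + 1)) ≤ f (x t) - ‖g (x t)‖ ^ 2 / (2 * (α * κ ^ 2)) := by
      have h := smooth_upper f g β hβpos.le hgrad hsmooth
        (x t - (1 / β) • g (x t)) (x t)
      have he : x t - (1 / β) • g (x t) - x t = -((1 / β) • g (x t)) := by module
      rw [he, inner_neg_right, real_inner_smul_right, real_inner_self_eq_norm_sq,
        norm_neg, norm_smul] at h
      rw [hy t]
      have harith : β / 2 * (‖(1:ℝ) / β‖ * ‖g (x t)‖) ^ 2 - 1 / β * ‖g (x t)‖ ^ 2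
          = -(‖g (x t)‖ ^ 2 / (2 * (α * κ ^ 2))) := by
        rw [Real.norm_eq_abs, abs_of_pos (by positivity : (0:ℝ) < 1/β), hβκ]
        field_simp
        ring
      linarith [h, harith]
    have hF2 : f (x t) - ⟪b, g (x t)⟫ + α / 2 * ‖b‖ ^ 2 ≤ f xstar := by
      have h := sc_lower f g α hgrad hconv xstar (x t)
      have he : xstar - x t = -b := by rw [hb]; module
      rw [he, inner_neg_right, norm_neg, real_inner_comm] at h
      linarith [h]
    have hF3 : f (x t) + s * (⟪b, g (x t)⟫ - ⟪a, g (x t)⟫)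
        + α / 2 * (s ^ 2 * (‖a‖ ^ 2 - 2 * ⟪a, b⟫ + ‖b‖ ^ 2)) ≤ f (y t) := by
      have h := sc_lower f g α hgrad hconv (y t) (x t)
      rw [hyx t, ← ha, ← hb] at h
      rw [real_inner_smul_right, inner_sub_right, norm_smul, Real.norm_eq_abs,
        abs_of_pos hs0, mul_pow] at h
      have hba : ‖b - a‖ ^ 2 = ‖a‖ ^ 2 - 2 * ⟪a, b⟫ + ‖b‖ ^ 2 := by
        rw [@norm_sub_sq_real, real_inner_comm]; ring
      rw [hba, real_inner_comm b (g (x t)), real_inner_comm a (g (x t))] at h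
      linarith [h]
    have hzp : z (t + 1) - xstar = (1 - s) • a + s • b - (s / α) • g (x t) := by
      rw [hzrec t, ha, hb]; module
    have hZ : α / 2 * ‖z (t + 1) - xstar‖ ^ 2 =
        α / 2 * (1 - s) ^ 2 * ‖a‖ ^ 2 + α / 2 * s ^ 2 * ‖b‖ ^ 2
          + ‖g (x t)‖ ^ 2 / (2 * (α * κ ^ 2))
          + α * (1 - s) * s * ⟪a, b⟫ - (1 - s) * s * ⟪a, g (x t)⟫
          - s ^ 2 * ⟪b, g (x t)⟫ := by
      rw [hzp, expand_norm_sq]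
      exact zexp α κ s (‖a‖ ^ 2) (‖b‖ ^ 2) (‖g (x t)‖ ^ 2) ⟪a, b⟫ ⟪a, g (x t)⟫
        ⟪b, g (x t)⟫ hα.ne' hκ0.ne' hsdef
    have hD : 0 ≤ ‖a‖ ^ 2 - 2 * ⟪a, b⟫ + ‖b‖ ^ 2 := by
      have h : ‖a - b‖ ^ 2 = ‖a‖ ^ 2 - 2 * ⟪a, b⟫ + ‖b‖ ^ 2 := by
        rw [@norm_sub_sq_real]
      rw [← h]; positivity
    have hgoal := key_scalar α κ s (‖a‖ ^ 2) (‖b‖ ^ 2) (‖g (x t)‖ ^ 2) ⟪a, b⟫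
      ⟪a, g (x t)⟫ ⟪b, g (x t)⟫ (‖z (t + 1) - xstar‖ ^ 2)
      (f (x t)) (f (y t)) (f xstar) (f (y (t + 1)))
      hα hκ1 hsdef hF1 hF2 hF3 hZ hD
    rw [ha] at hgoal
    simp only [hΦdef]
    linarith [hgoal]
  have hΦ0nn : 0 ≤ Φ 0 := by
    have h1 := hmin (y 0)
    have h2 : (0:ℝ) ≤ α / 2 * ‖z 0 - xstar‖ ^ 2 := by positivity
    simp only [hΦdef]
    linarith
  have hΦind : ∀ t : ℕ, Φ t ≤ (1 - s) ^ t * Φ 0 := by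
    intro t
    induction t with
    | zero => simp
    | succ n ih =>
      calc Φ (n + 1) ≤ (1 - s) * Φ n := hstep n
        _ ≤ (1 - s) * ((1 - s) ^ n * Φ 0) :=
            mul_le_mul_of_nonneg_left ih (by linarith)
        _ = (1 - s) ^ (n + 1) * Φ 0 := by ring
  have hΦ0le : Φ 0 ≤ 2 * (f (x 0) - f xstar) := by
    have h := sc_lower f g α hgrad hconv (x 0) xstar
    rw [hg0] at h
    simp only [inner_zero_left, add_zero] at h
    simp only [hΦdef, hy0, hz0]
    linarith [h]
  intro t
  have h1 : f (y t) - f xstar ≤ Φ t := by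
    have h2 : (0:ℝ) ≤ α / 2 * ‖z t - xstar‖ ^ 2 := by positivity
    simp only [hΦdef]
    linarith
  have h2 : (1 - s) ^ t ≤ Real.exp (-s) ^ t := by
    apply pow_le_pow_left₀ (by linarith)
    linarith [Real.add_one_le_exp (-s)]
  have h3 : Real.exp (-s) ^ t = Real.exp (-(t : ℝ) / κ) := by
    rw [← Real.exp_nat_mul]
    congr 1
    rw [hsdef]
    ring
  calc f (y t) - f xstar ≤ Φ t := h1
    _ ≤ (1 - s) ^ t * Φ 0 := hΦind t
    _ ≤ Real.exp (-s) ^ t * Φ 0 := mul_le_mul_of_nonneg_right h2 hΦ0nn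
    _ ≤ Real.exp (-s) ^ t * (2 * (f (x 0) - f xstar)) :=
        mul_le_mul_of_nonneg_left hΦ0le (by positivity)
    _ = 2 * (f (x 0) - f xstar) * Real.exp (-(t : ℝ) / κ) := by rw [h3]; ring
end
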